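/- The stability function of the central IELDTM of order K=2, R(z) = (1 + z/2 + z²/8)/(1 - z/2 + z²/8), satisfies |R(z)| ≤ 1 for all complex z with Re(z) ≤ 0. -/

import Mathlib

theorem ieldtm_central_K2_A_stable (z : ℂ) (hz : z.re ≤ 0) :
    ‖(1 + z / 2 + z ^ 2 / 8) / (1 - z / 2 + z ^ 2 / 8)‖ ≤ 1 := by
  rw [norm_div]
  apply div_le_one_of_le₀
  · rw [Complex.norm_def, Complex.norm_def]
    apply Real.sqrt_le_sqrt
    simp only [Complex.normSq_apply, Complex.add_re, Complex.sub_re, Complex.add_im,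
      Complex.sub_im, Complex.one_re, Complex.one_im, Complex.div_re, Complex.div_im, Complex.re_ofNat, Complex.im_ofNat, Complex.normSq_ofNat]
    set x := z.re
    set y := z.im
    have h2 : (z ^ 2).re = x ^ 2 - y ^ 2 := by
      rw [sq]; simp [Complex.mul_re]; ring
    have h3 : (z ^ 2).im = 2 * x * y := by
      rw [sq]; simp [Complex.mul_im]; ring
    rw [h2, h3]
    nlinarith [sq_nonneg x, sq_nonneg y, sq_nonneg (x*y)]
  · exact norm_nonneg _
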